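/- Let X be a set of n points in ℝ^d, R a range family, 0 < ε < 1, ρ > 0, and i ≥ 1 an integer with 1/2^{i−1} > ρ. Fix h ∈ R with |X∩h| ≤ ρn, and let R' ⊆ R be a subfamily in which every range h' satisfies |X∩h'| ≤ n(1+ε)/2^{i−1}. Then |X ∩ DIS(R')|/n ≤ θ_{U(X)}^h(2ρ) · (ρ + (1+ε)/2^{i−1}). -/

import Mathlib

open Set

/-- The disagreement region of a family of ranges. -/
def DIS {α : Type*} (R' : Set (Set α)) : Set α :=
  {x | ∃ h₁ ∈ R', ∃ h₂ ∈ R', x ∈ h₁ ∧ x ∉ h₂}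

/-- The `r`-ball around `h` under the uniform distribution on the finite set `X`:
all ranges `h' ∈ R` with `|X ∩ DIS({h,h'})| ≤ r·|X|`. -/
noncomputable def ballU {α : Type*} (X : Set α) (R : Set (Set α)) (h : Set α) (r : ℝ) :
    Set (Set α) :=
  {h' | h' ∈ R ∧ ((X ∩ DIS {h, h'}).ncard : ℝ) ≤ r * (X.ncard : ℝ)}

/-- The disagreement coefficient `θ_{U(X)}^h(σ)` of a range `h`
with respect to the uniform distribution on `X`. -/
noncomputable def thetaU {α : Type*} (X : Set α) (R : Set (Set α)) (h : Set α) (σ : ℝ) : ℝ :=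
  max 1 (sSup {v : ℝ | ∃ r : ℝ, σ < r ∧
    v = ((X ∩ DIS (ballU X R h r)).ncard : ℝ) / (r * (X.ncard : ℝ))})

theorem stmt3 (d : ℕ) (X : Set (Fin d → ℝ)) (hX : X.Finite)
    (R R' : Set (Set (Fin d → ℝ))) (hsub : R' ⊆ R)
    (ε ρ : ℝ) (hε0 : 0 < ε) (hε1 : ε < 1) (hρ0 : 0 < ρ)
    (i : ℕ) (hi : 1 ≤ i) (hiρ : ρ < 1 / (2 : ℝ) ^ (i - 1))
    (h : Set (Fin d → ℝ)) (hh : h ∈ R)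
    (hhρ : ((X ∩ h).ncard : ℝ) ≤ ρ * (X.ncard : ℝ))
    (hsmall : ∀ h' ∈ R',
      ((X ∩ h').ncard : ℝ) ≤ (X.ncard : ℝ) * (1 + ε) / (2 : ℝ) ^ (i - 1)) :
    ((X ∩ DIS R').ncard : ℝ) / (X.ncard : ℝ) ≤
      thetaU X R h (2 * ρ) * (ρ + (1 + ε) / (2 : ℝ) ^ (i - 1)) := by

  set r : ℝ := ρ + (1 + ε) / (2 : ℝ) ^ (i - 1) with hrdef
  have hpow : (0:ℝ) < (2 : ℝ) ^ (i - 1) := by positivity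
  have hrpos : (0:ℝ) < r := by positivity
  have hth1 : (1:ℝ) ≤ thetaU X R h (2 * ρ) := le_max_left _ _
  have h2ρr : 2 * ρ < r := by
    have : ρ < (1 + ε) / (2 : ℝ) ^ (i - 1) := lt_of_lt_of_le hiρ (by gcongr; linarith)
    simp only [hrdef]; linarith
  by_cases hn : (X.ncard : ℝ) = 0
  · rw [hn, div_zero]
    have : (0:ℝ) < thetaU X R h (2 * ρ) * r := by
      apply mul_pos (lt_of_lt_of_le one_pos hth1) hrpos
    linarith
  have hnpos : (0:ℝ) < (X.ncard : ℝ) := lt_of_le_of_ne (Nat.cast_nonneg _) (Ne.symm hn)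
  -- Step 1 : R' ⊆ ballU X R h r
  have hball : R' ⊆ ballU X R h r := by
    intro h' hh'
    refine ⟨hsub hh', ?_⟩
    have hdis : X ∩ DIS {h, h'} ⊆ (X ∩ h) ∪ (X ∩ h') := by
      rintro x ⟨hxX, h₁, hm1, h₂, hm2, hx1, hx2⟩
      rcases hm1 with rfl | rfl
      · exact Or.inl ⟨hxX, hx1⟩
      · exact Or.inr ⟨hxX, hx1⟩
    have hfin : ((X ∩ h) ∪ (X ∩ h')).Finite :=
      (hX.inter_of_left _).union (hX.inter_of_left _)
    have hle : (X ∩ DIS {h, h'}).ncard ≤ (X ∩ h).ncard + (X ∩ h').ncard :=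
      le_trans (Set.ncard_le_ncard hdis hfin) (Set.ncard_union_le _ _)
    have hle' : ((X ∩ DIS {h, h'}).ncard : ℝ) ≤
        ((X ∩ h).ncard : ℝ) + ((X ∩ h').ncard : ℝ) := by exact_mod_cast hle
    have := hsmall h' hh'
    calc ((X ∩ DIS {h, h'}).ncard : ℝ) ≤ ρ * (X.ncard : ℝ) +
          (X.ncard : ℝ) * (1 + ε) / (2 : ℝ) ^ (i - 1) := by linarith
      _ = r * (X.ncard : ℝ) := by simp only [hrdef]; ring
  -- Step 2 : monotonicity of DIS
  have hmono : X ∩ DIS R' ⊆ X ∩ DIS (ballU X R h r) := by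
    rintro x ⟨hxX, h₁, hm1, h₂, hm2, hx1, hx2⟩
    exact ⟨hxX, h₁, hball hm1, h₂, hball hm2, hx1, hx2⟩
  have hcard : ((X ∩ DIS R').ncard : ℝ) ≤ ((X ∩ DIS (ballU X R h r)).ncard : ℝ) := by
    exact_mod_cast Set.ncard_le_ncard hmono (hX.inter_of_left _)
  -- Step 3 : v is in the sup set
  set S : Set ℝ := {v : ℝ | ∃ r' : ℝ, 2 * ρ < r' ∧
    v = ((X ∩ DIS (ballU X R h r')).ncard : ℝ) / (r' * (X.ncard : ℝ))} with hSdef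
  set v : ℝ := ((X ∩ DIS (ballU X R h r)).ncard : ℝ) / (r * (X.ncard : ℝ)) with hvdef
  have hvS : v ∈ S := ⟨r, h2ρr, rfl⟩
  have hbdd : BddAbove S := by
    refine ⟨1 / (2 * ρ), ?_⟩
    rintro w ⟨r', hr', rfl⟩
    have hr'pos : (0:ℝ) < r' := lt_trans (by linarith) hr'
    have hle : ((X ∩ DIS (ballU X R h r')).ncard : ℝ) ≤ (X.ncard : ℝ) := by
      exact_mod_cast Set.ncard_le_ncard (Set.inter_subset_left) hX
    calc ((X ∩ DIS (ballU X R h r')).ncard : ℝ) / (r' * (X.ncard : ℝ))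
        ≤ (X.ncard : ℝ) / (r' * (X.ncard : ℝ)) := by gcongr
      _ = 1 / r' := by field_simp
      _ ≤ 1 / (2 * ρ) := by
          apply one_div_le_one_div_of_le (by positivity) (le_of_lt hr')
  have hvth : v ≤ thetaU X R h (2 * ρ) :=
    le_trans (le_csSup hbdd hvS) (le_max_right _ _)
  -- Final computation
  have : ((X ∩ DIS R').ncard : ℝ) / (X.ncard : ℝ) ≤ v * r := by
    have hvr : v * r = ((X ∩ DIS (ballU X R h r)).ncard : ℝ) / (X.ncard : ℝ) := by
      rw [hvdef]; field_simp
    rw [hvr]; gcongr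
  calc ((X ∩ DIS R').ncard : ℝ) / (X.ncard : ℝ) ≤ v * r := this
    _ ≤ thetaU X R h (2 * ρ) * r := by
        apply mul_le_mul_of_nonneg_right hvth (le_of_lt hrpos)
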